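/- Let N be a rooted phylogenetic network on a finite set X. The normalisation Ñ of N is a tree (every vertex of Ñ has in-degree at most 1) if and only if the collection {C_N(v) : v ∈ V_vis(N)} of clusters of visible vertices of N forms a hierarchy on X. -/

import Mathlib

/-!
Formalisation framework for rooted phylogenetic networks.

A network is represented as a directed graph on an ambient vertex type `V`:
a vertex set `verts`, a root vertex `root`, and an arc relation `arc`.
-/

structure Net (V : Type*) where
  verts : Set V
  root : V
  arc : V → V → Prop

namespace Net

variable {V : Type*} {W : Type*}

/-- `N.reach u v` means there is a (possibly empty) directed path from `u` to `v`. -/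
def reach (N : Net V) : V → V → Prop := Relation.ReflTransGen N.arc

/-- The in-degree of a vertex. -/
noncomputable def inDeg (N : Net V) (v : V) : ℕ := {u | N.arc u v}.ncard

/-- The out-degree of a vertex. -/
noncomputable def outDeg (N : Net V) (v : V) : ℕ := {w | N.arc v w}.ncard

/-- The leaves of `N`: the vertices of out-degree 0. -/
def leaves (N : Net V) : Set V := {v ∈ N.verts | N.outDeg v = 0}

/-- `N.IsPathFrom u v l` : the list `l` is a directed path in `N` from `u` to `v`
(consecutive entries joined by arcs; a one-element list is the empty path). -/
def IsPathFrom (N : Net V) (u v : V) (l : List V) : Prop :=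
  l.Chain' N.arc ∧ l.head? = some u ∧ l.getLast? = some v

/-- A vertex is visible if some leaf is such that every directed path from the
root to that leaf passes through the vertex. -/
def Visible (N : Net V) (x : V) : Prop :=
  x ∈ N.verts ∧ ∃ y ∈ N.leaves, ∀ l : List V, N.IsPathFrom N.root y l → x ∈ l

/-- A subdividing vertex is one of in-degree 1 and out-degree 1. -/
def Subdividing (N : Net V) (v : V) : Prop := N.inDeg v = 1 ∧ N.outDeg v = 1

/-- The digraph `Cov(N)` on the visible vertices of `N`: an arc `(u,v)` whenever
`u ≠ v`, `u →_N v`, and no visible vertex lies strictly between `u` and `v`. -/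
def cov (N : Net V) : Net V where
  verts := {v | N.Visible v}
  root := N.root
  arc u v := N.Visible u ∧ N.Visible v ∧ u ≠ v ∧ N.reach u v ∧
    ¬ ∃ w, N.Visible w ∧ w ≠ u ∧ w ≠ v ∧ N.reach u w ∧ N.reach w v

/-- The normalisation `Ñ` of `N`: obtained from `Cov(N)` by suppressing every
subdividing vertex.  Its vertices are the visible vertices of `N` that are not
subdividing in `Cov(N)`, with an arc `(u,v)` whenever `Cov(N)` has a directed path
from `u` to `v` (of length at least one) all of whose interior vertices are
subdividing in `Cov(N)`. -/
def normalise (N : Net V) : Net V where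
  verts := {v | N.Visible v ∧ ¬ N.cov.Subdividing v}
  root := N.root
  arc u v := (N.Visible u ∧ ¬ N.cov.Subdividing u) ∧ (N.Visible v ∧ ¬ N.cov.Subdividing v) ∧
    ∃ l : List V, N.cov.IsPathFrom u v l ∧ 2 ≤ l.length ∧
      ∀ w ∈ l.tail.dropLast, N.cov.Subdividing w

/-- `N` is a rooted phylogenetic network on the finite nonempty leaf set `X`. -/
structure IsPhylo (N : Net V) (X : Set V) : Prop where
  finite : N.verts.Finite
  nonempty : X.Nonempty
  arc_mem : ∀ ⦃u v : V⦄, N.arc u v → u ∈ N.verts ∧ v ∈ N.verts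
  acyclic : ∀ ⦃u v : V⦄, N.arc u v → ¬ N.reach v u
  root_mem : N.root ∈ N.verts
  root_inDeg : N.inDeg N.root = 0
  root_unique : ∀ v ∈ N.verts, N.inDeg v = 0 → v = N.root
  leaves_eq : N.leaves = X
  leaf_inDeg : ∀ x ∈ X, N.inDeg x = 1
  interior_deg : ∀ v ∈ N.verts, v ≠ N.root → v ∉ X →
    (N.inDeg v = 1 ∧ 2 ≤ N.outDeg v) ∨ (N.outDeg v = 1 ∧ 2 ≤ N.inDeg v)

/-- `N` has no shortcuts: no arc `(u,v)` such that there is also a directed path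
from `u` to `v` of length at least 2 (i.e. a path-list with at least 3 entries). -/
def NoShortcuts (N : Net V) : Prop :=
  ∀ u v : V, N.arc u v → ¬ ∃ l : List V, N.IsPathFrom u v l ∧ 3 ≤ l.length

/-- Tree-child: every vertex is visible. -/
def TreeChild (N : Net V) : Prop := ∀ v ∈ N.verts, N.Visible v

/-- Normal: tree-child with no shortcuts. -/
def Normal (N : Net V) : Prop := N.TreeChild ∧ N.NoShortcuts

/-- A tree: every vertex has in-degree at most 1. -/
def IsTree (N : Net V) : Prop := ∀ v ∈ N.verts, N.inDeg v ≤ 1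

/-- The cluster of `v`: the set of leaves reachable from `v`. -/
def cluster (N : Net V) (v : V) : Set V := {x ∈ N.leaves | N.reach v x}

/-- The identifying set of `v`: the set of leaves `x` such that every directed
path from the root to `x` passes through `v`. -/
def ident (N : Net V) (v : V) : Set V :=
  {x ∈ N.leaves | ∀ l : List V, N.IsPathFrom N.root x l → v ∈ l}

/-- A digraph isomorphism between two networks, given by the map `f`. -/
def NetEquiv (M : Net V) (M' : Net W) (f : V → W) : Prop :=
  Set.BijOn f M.verts M'.verts ∧
    ∀ u ∈ M.verts, ∀ v ∈ M.verts, (M.arc u v ↔ M'.arc (f u) (f v))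

/-- Two networks over the same ambient type are equivalent relative to a leaf set
`X` if there is a digraph isomorphism between them fixing each element of `X`. -/
def EquivOn (M M' : Net V) (X : Set V) : Prop :=
  ∃ f : V → V, NetEquiv M M' f ∧ ∀ x ∈ X, f x = x

/-- `N₁ ⊕ N₂` : disjoint copies of `N₁` and `N₂` under a new root (`none`). -/
def oplus {V₁ V₂ : Type*} (N₁ : Net V₁) (N₂ : Net V₂) : Net (Option (V₁ ⊕ V₂)) where
  verts := insert none
    ((fun v => some (Sum.inl v)) '' N₁.verts ∪ (fun v => some (Sum.inr v)) '' N₂.verts)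
  root := none
  arc a b :=
    match a, b with
    | none, some (Sum.inl w) => w = N₁.root
    | none, some (Sum.inr w) => w = N₂.root
    | some (Sum.inl u), some (Sum.inl w) => N₁.arc u w
    | some (Sum.inr u), some (Sum.inr w) => N₂.arc u w
    | _, _ => False

/-- `N₁ ⊗ N₂` : identify each leaf `x` of `N₁` with the root of its own copy of `N₂`;
the copy of a non-leaf vertex `u` of `N₁` is `Sum.inl u`, and the vertex `w` of the
copy of `N₂` attached at leaf `x` of `N₁` is `Sum.inr (x, w)`. -/
def otimes {V₁ V₂ : Type*} (N₁ : Net V₁) (N₂ : Net V₂) : Net (V₁ ⊕ V₁ × V₂) where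
  verts := Sum.inl '' (N₁.verts \ N₁.leaves) ∪ Sum.inr '' (N₁.leaves ×ˢ N₂.verts)
  root := Sum.inl N₁.root
  arc a b :=
    match a, b with
    | Sum.inl u, Sum.inl w => N₁.arc u w ∧ w ∉ N₁.leaves
    | Sum.inl u, Sum.inr (x, w) => x ∈ N₁.leaves ∧ N₁.arc u x ∧ w = N₂.root
    | Sum.inr (x, w), Sum.inr (x', w') => x = x' ∧ x ∈ N₁.leaves ∧ N₂.arc w w'
    | _, _ => False

end Net

/-- A hierarchy: a collection of sets any two of which are disjoint or nested. -/
def IsHierarchy {V : Type*} (C : Set (Set V)) : Prop :=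
  ∀ A ∈ C, ∀ B ∈ C, A ∩ B = ∅ ∨ A ⊆ B ∨ B ⊆ A


namespace S12

open Relation List

variable {V : Type*} {N : Net V} {X : Set V}

/-! ### Generic list/chain lemmas -/

lemma mem_of_getLast {l : List V} {b : V} (h : l.getLast? = some b) : b ∈ l := by
  obtain ⟨h', rfl⟩ := List.mem_getLast?_eq_getLast (by rw [h]; rfl)
  exact List.getLast_mem h'

lemma chain_head_mem {r : V → V → Prop} :
    ∀ (l : List V) {a c : V}, l.Chain' r → l.head? = some a → c ∈ l →
      Relation.ReflTransGen r a c := by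
  intro l
  induction l with
  | nil => intro a c _ h hm; simp at hm
  | cons x xs ih =>
    intro a c hch hh hm
    have hax : x = a := by simpa using hh
    subst hax
    rcases List.mem_cons.mp hm with rfl | hm
    · exact Relation.ReflTransGen.refl
    · cases xs with
      | nil => simp at hm
      | cons y ys =>
        exact Relation.ReflTransGen.head (List.isChain_cons_cons.mp hch).1
          (ih (List.isChain_cons_cons.mp hch).2 rfl hm)

lemma chain_mem_last {r : V → V → Prop} :
    ∀ (l : List V) {b c : V}, l.Chain' r → l.getLast? = some b → c ∈ l →
      Relation.ReflTransGen r c b := by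
  intro l
  induction l with
  | nil => intro b c _ h hm; simp at hm
  | cons x xs ih =>
    intro b c hch hl hm
    cases xs with
    | nil =>
      have h1 : x = b := by simpa using hl
      have h2 : c = x := by simpa using hm
      subst h1; subst h2; exact Relation.ReflTransGen.refl
    | cons y ys =>
      have hl' : (y :: ys).getLast? = some b := by
        rw [List.getLast?_cons_cons] at hl; exact hl
      rcases List.mem_cons.mp hm with rfl | hm
      · exact Relation.ReflTransGen.head (List.isChain_cons_cons.mp hch).1
          (ih (List.isChain_cons_cons.mp hch).2 hl' List.mem_cons_self)
      · exact ih (List.isChain_cons_cons.mp hch).2 hl' hm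

/-! ### Basic reachability lemmas -/

lemma reach_antisymm (hN : N.IsPhylo X) {a b : V} (h1 : N.reach a b) (h2 : N.reach b a) :
    a = b := by
  rcases Relation.ReflTransGen.cases_head h1 with rfl | ⟨c, hac, hcb⟩
  · rfl
  · exact absurd (hcb.trans h2) (hN.acyclic hac)

lemma mem_verts_left (hN : N.IsPhylo X) {a b : V} (h : N.reach a b) (hne : a ≠ b) :
    a ∈ N.verts := by
  rcases Relation.ReflTransGen.cases_head h with rfl | ⟨c, hac, _⟩
  · exact absurd rfl hne
  · exact (hN.arc_mem hac).1

lemma mem_verts_right (hN : N.IsPhylo X) {a b : V} (h : N.reach a b) (hne : a ≠ b) :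
    b ∈ N.verts := by
  rcases Relation.ReflTransGen.cases_tail h with rfl | ⟨c, _, hcb⟩
  · exact absurd rfl hne.symm
  · exact (hN.arc_mem hcb).2

/-! ### Measures for induction -/

/-- vertices strictly above `v`. -/
def above (N : Net V) (v : V) : Set V := {t | N.reach t v ∧ t ≠ v}

/-- vertices strictly below `v`. -/
def below (N : Net V) (v : V) : Set V := {t | N.reach v t ∧ t ≠ v}

lemma above_finite (hN : N.IsPhylo X) (v : V) : (above N v).Finite :=
  hN.finite.subset fun t ht => mem_verts_left hN ht.1 ht.2

lemma below_finite (hN : N.IsPhylo X) (v : V) : (below N v).Finite :=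
  hN.finite.subset fun t ht => mem_verts_right hN ht.1 (Ne.symm ht.2)

lemma above_lt (hN : N.IsPhylo X) {u v : V} (h : N.reach u v) (hne : u ≠ v) :
    (above N u).ncard < (above N v).ncard := by
  apply Set.ncard_lt_ncard ?_ (above_finite hN v)
  constructor
  · rintro t ⟨htu, htne⟩
    refine ⟨htu.trans h, ?_⟩
    rintro rfl
    exact hne (reach_antisymm hN h htu)
  · intro hsub
    exact (hsub ⟨h, hne⟩).2 rfl

lemma below_lt (hN : N.IsPhylo X) {u v : V} (h : N.reach u v) (hne : u ≠ v) :
    (below N v).ncard < (below N u).ncard := by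
  apply Set.ncard_lt_ncard ?_ (below_finite hN u)
  constructor
  · rintro t ⟨hvt, htne⟩
    refine ⟨h.trans hvt, ?_⟩
    rintro rfl
    exact hne (reach_antisymm hN h hvt)
  · intro hsub
    exact (hsub ⟨h, Ne.symm hne⟩).2 rfl

/-! ### Root reaches everything; paths -/

lemma root_reach (hN : N.IsPhylo X) : ∀ v ∈ N.verts, N.reach N.root v := by
  suffices h : ∀ n, ∀ v ∈ N.verts, (above N v).ncard ≤ n → N.reach N.root v by
    intro v hv; exact h _ v hv le_rfl
  intro n
  induction n using Nat.strong_induction_on with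
  | _ n ih =>
    intro v hv hle
    by_cases hroot : v = N.root
    · subst hroot; exact Relation.ReflTransGen.refl
    · obtain ⟨u, hu⟩ : ∃ u, N.arc u v := by
        by_contra hno
        push_neg at hno
        have hemp : {u | N.arc u v} = ∅ := Set.eq_empty_iff_forall_notMem.mpr hno
        have : N.inDeg v = 0 := by
          unfold Net.inDeg; rw [hemp]; simp
        exact hroot (hN.root_unique v hv this)
      have huv : u ≠ v := by rintro rfl; exact hN.acyclic hu Relation.ReflTransGen.refl
      have hlt : (above N u).ncard < (above N v).ncard :=
        above_lt hN (Relation.ReflTransGen.single hu) huv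
      exact (ih _ (lt_of_lt_of_le hlt hle) u (hN.arc_mem hu).1 le_rfl).tail hu

lemma exists_path {a b : V} (h : N.reach a b) : ∃ l, N.IsPathFrom a b l := by
  induction h using Relation.ReflTransGen.head_induction_on with
  | refl => exact ⟨[b], List.isChain_singleton b, rfl, rfl⟩
  | @head a' c' hac hcb ih =>
    obtain ⟨l, hch, hh, hl⟩ := ih
    cases l with
    | nil => simp at hh
    | cons x xs =>
      have hx : x = c' := by simpa using hh
      subst hx
      exact ⟨a' :: x :: xs, List.isChain_cons_cons.mpr ⟨hac, hch⟩, rfl,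
        by rw [List.getLast?_cons_cons]; exact hl⟩

lemma path_mem_reach {a b c : V} {l : List V} (hp : N.IsPathFrom a b l) (hc : c ∈ l) :
    N.reach a c ∧ N.reach c b :=
  ⟨chain_head_mem l hp.1 hp.2.1 hc, chain_mem_last l hp.1 hp.2.2 hc⟩

lemma path_append {a b c : V} {l₁ l₂ : List V} (h1 : N.IsPathFrom a b l₁)
    (h2 : N.IsPathFrom b c l₂) : N.IsPathFrom a c (l₁ ++ l₂.tail) := by
  obtain ⟨ch1, hh1, hl1⟩ := h1
  obtain ⟨ch2, hh2, hl2⟩ := h2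
  cases l₂ with
  | nil => simp at hh2
  | cons x xs =>
    have hbx : x = b := by simpa using hh2
    subst hbx
    cases xs with
    | nil =>
      have hcb : x = c := by simpa using hl2
      subst hcb
      exact ⟨by simpa using ch1, by simpa using hh1, by simpa using hl1⟩
    | cons y ys =>
      refine ⟨?_, ?_, ?_⟩
      · apply List.IsChain.append ch1 (List.isChain_cons_cons.mp ch2).2
        intro p hp q hq
        have hp' : x = p := by rw [hl1] at hp; simpa using hp
        have hq' : y = q := by simpa using hq
        rw [← hp', ← hq']
        exact (List.isChain_cons_cons.mp ch2).1
      · cases l₁ with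
        | nil => simp at hh1
        | cons z zs => simpa using hh1
      · show (l₁ ++ (y :: ys)).getLast? = some c
        rw [List.getLast?_append]
        have h3 : (y :: ys).getLast? = some c := by
          rw [← List.getLast?_cons_cons (a := x)]; exact hl2
        rw [h3]; rfl


/-! ### Leaves and visibility -/

lemma leaf_no_arc (hN : N.IsPhylo X) {x : V} (hx : x ∈ N.leaves) {w : V} (h : N.arc x w) :
    False := by
  have hfin : {w | N.arc x w}.Finite := hN.finite.subset fun t ht => (hN.arc_mem ht).2
  have h0 : {w | N.arc x w} = ∅ := (Set.ncard_eq_zero hfin).mp hx.2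
  exact absurd h (by intro h'; rw [Set.eq_empty_iff_forall_notMem] at h0; exact h0 w h')

lemma leaf_reach (hN : N.IsPhylo X) {x t : V} (hx : x ∈ N.leaves) (h : N.reach x t) :
    t = x := by
  rcases Relation.ReflTransGen.cases_head h with rfl | ⟨c, hc, _⟩
  · rfl
  · exact (leaf_no_arc hN hx hc).elim

lemma leaf_visible (hx : x ∈ N.leaves) : N.Visible x :=
  ⟨hx.1, x, hx, fun _ hl => mem_of_getLast hl.2.2⟩

lemma cov_arc_reach {a b : V} (h : N.cov.arc a b) : N.reach a b := h.2.2.2.1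

lemma cov_arc_ne {a b : V} (h : N.cov.arc a b) : a ≠ b := h.2.2.1

lemma leaf_not_sub (hN : N.IsPhylo X) {x : V} (hx : x ∈ N.leaves) :
    ¬ N.cov.Subdividing x := by
  rintro ⟨-, hout⟩
  obtain ⟨c, hc⟩ := Set.ncard_eq_one.mp hout
  have hxc : N.cov.arc x c := by
    have : c ∈ {w | N.cov.arc x w} := by rw [hc]; rfl
    exact this
  exact cov_arc_ne hxc (leaf_reach hN hx (cov_arc_reach hxc)).symm

lemma visible_leaf (hN : N.IsPhylo X) {v : V} (hv : N.Visible v) :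
    ∃ y ∈ N.leaves, N.reach v y ∧ ∀ l, N.IsPathFrom N.root y l → v ∈ l := by
  obtain ⟨hvm, y, hy, hvy⟩ := hv
  obtain ⟨l, hl⟩ := exists_path (root_reach hN y hy.1)
  exact ⟨y, hy, (path_mem_reach hl (hvy l hl)).2, hvy⟩

/-! ### Comparability from visibility -/

lemma comp_of_ident (hN : N.IsPhylo X) {u y t : V} (hy : y ∈ N.leaves)
    (hident : ∀ l, N.IsPathFrom N.root y l → u ∈ l) (ht : t ∈ N.verts)
    (hty : N.reach t y) : N.reach t u ∨ N.reach u t := by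
  obtain ⟨l₁, h1⟩ := exists_path (root_reach hN t ht)
  obtain ⟨l₂, h2⟩ := exists_path hty
  have hu' := hident _ (path_append h1 h2)
  rcases List.mem_append.mp hu' with h | h
  · exact Or.inr (path_mem_reach h1 h).2
  · exact Or.inl (path_mem_reach h2 (List.mem_of_mem_tail h)).1

lemma comp_of_hier (hN : N.IsPhylo X) (hH : IsHierarchy (N.cluster '' {v | N.Visible v}))
    {a b : V} (ha : N.Visible a) (hb : N.Visible b)
    (hover : (N.cluster a ∩ N.cluster b).Nonempty) : N.reach a b ∨ N.reach b a := by
  rcases hH _ ⟨a, ha, rfl⟩ _ ⟨b, hb, rfl⟩ with hdisj | hab | hba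
  · obtain ⟨x, hx⟩ := hover
    rw [hdisj] at hx
    exact hx.elim
  · obtain ⟨y, hy, hya, hid⟩ := visible_leaf hN ha
    have hyb : y ∈ N.cluster b := hab ⟨hy, hya⟩
    rcases comp_of_ident hN hy hid hb.1 hyb.2 with h | h
    · exact Or.inr h
    · exact Or.inl h
  · obtain ⟨y, hy, hyb, hid⟩ := visible_leaf hN hb
    have hya : y ∈ N.cluster a := hba ⟨hy, hyb⟩
    rcases comp_of_ident hN hy hid ha.1 hya.2 with h | h
    · exact Or.inl h
    · exact Or.inr h

/-! ### Hierarchy implies unique cov-parents -/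

lemma cov_parent_unique (hN : N.IsPhylo X) (hH : IsHierarchy (N.cluster '' {v | N.Visible v}))
    {a a' b : V} (h1 : N.cov.arc a b) (h2 : N.cov.arc a' b) : a = a' := by
  by_contra hne
  obtain ⟨y, hy, hby, -⟩ := visible_leaf hN h1.2.1
  have hover : (N.cluster a ∩ N.cluster a').Nonempty :=
    ⟨y, ⟨hy, (cov_arc_reach h1).trans hby⟩, ⟨hy, (cov_arc_reach h2).trans hby⟩⟩
  rcases comp_of_hier hN hH h1.1 h2.1 hover with h | h
  · exact h1.2.2.2.2 ⟨a', h2.1, Ne.symm hne, cov_arc_ne h2, h, cov_arc_reach h2⟩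
  · exact h2.2.2.2.2 ⟨a, h1.1, hne, cov_arc_ne h1, h, cov_arc_reach h1⟩

/-! ### Backwards uniqueness of subdividing chains -/

lemma back_unique (hN : N.IsPhylo X) (hH : IsHierarchy (N.cluster '' {v | N.Visible v})) :
    ∀ (t : List V) (v u : V), (v :: t).Chain' (fun x y => N.cov.arc y x) →
      (∀ w ∈ t.dropLast, N.cov.Subdividing w) → t.getLast? = some u →
      ¬ N.cov.Subdividing u →
    ∀ (t' : List V) (u' : V), (v :: t').Chain' (fun x y => N.cov.arc y x) →
      (∀ w ∈ t'.dropLast, N.cov.Subdividing w) → t'.getLast? = some u' →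
      ¬ N.cov.Subdividing u' → u = u' := by
  intro t
  induction t with
  | nil => intro v u _ _ h; simp at h
  | cons c t₂ ih =>
    intro v u hch hsub hlast hu t' u' hch' hsub' hlast' hu'
    cases t' with
    | nil => simp at hlast'
    | cons c' t₂' =>
      have hcv : N.cov.arc c v := (List.isChain_cons_cons.mp hch).1
      have hcv' : N.cov.arc c' v := (List.isChain_cons_cons.mp hch').1
      have hcc : c = c' := cov_parent_unique hN hH hcv hcv'
      subst hcc
      cases t₂ with
      | nil =>
        have hcu : c = u := by simpa using hlast
        cases t₂' with
        | nil =>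
          have hcu' : c = u' := by simpa using hlast'
          exact hcu ▸ hcu'
        | cons d t₃ =>
          exact absurd (hcu ▸ hsub' c (by simp)) hu
      | cons d t₃ =>
        cases t₂' with
        | nil =>
          have hcu' : c = u' := by simpa using hlast'
          exact absurd (hcu' ▸ hsub c (by simp)) hu'
        | cons d' t₃' =>
          refine ih c u (List.isChain_cons_cons.mp hch).2 ?_
            (by rw [← List.getLast?_cons_cons (a := c)]; exact hlast) hu
            (d' :: t₃') u' (List.isChain_cons_cons.mp hch').2 ?_
            (by rw [← List.getLast?_cons_cons (a := c)]; exact hlast') hu'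
          · intro w hw
            exact hsub w (by simp at hw ⊢; tauto)
          · intro w hw
            exact hsub' w (by simp at hw ⊢; tauto)
/-! ### cov chains give reachability -/

lemma reach_flatten {a b : V} (h : Relation.ReflTransGen N.reach a b) : N.reach a b := by
  induction h with
  | refl => exact Relation.ReflTransGen.refl
  | tail _ h2 ih => exact ih.trans h2

lemma cov_chain_reach {a b : V} {l : List V} (hch : l.Chain' N.cov.arc)
    (hh : l.head? = some a) (hl : l.getLast? = some b) : N.reach a b := by
  have h := chain_head_mem l hch hh (mem_of_getLast hl)
  exact reach_flatten (Relation.ReflTransGen.mono (fun x y hxy => cov_arc_reach hxy) _ _ h)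

lemma norm_arc_reach {a b : V} (h : N.normalise.arc a b) : N.reach a b := by
  obtain ⟨-, -, l, hp, -, -⟩ := h
  exact cov_chain_reach hp.1 hp.2.1 hp.2.2

lemma norm_rtg_reach {a b : V} (h : Relation.ReflTransGen N.normalise.arc a b) :
    N.reach a b :=
  reach_flatten (Relation.ReflTransGen.mono (fun _ _ hxy => norm_arc_reach hxy) _ _ h)

/-! ### First cov-step towards a visible target -/

lemma cov_first_step (hN : N.IsPhylo X) {u t : V} (hu : N.Visible u) (ht : N.Visible t)
    (hr : N.reach u t) (hne : u ≠ t) : ∃ c, N.cov.arc u c ∧ N.reach c t := by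
  set S : Set V := {c | N.Visible c ∧ N.reach u c ∧ N.reach c t ∧ c ≠ u} with hS
  have hfin : S.Finite := hN.finite.subset fun c hc => hc.1.1
  have hne' : S.Nonempty := ⟨t, ht, hr, Relation.ReflTransGen.refl, Ne.symm hne⟩
  obtain ⟨c, hc, hmin⟩ := Set.exists_min_image S (fun c => (above N c).ncard) hfin hne'
  refine ⟨c, ⟨hu, hc.1, Ne.symm hc.2.2.2, hc.2.1, ?_⟩, hc.2.2.1⟩
  rintro ⟨w, hwv, hwu, hwc, huw, hwc2⟩
  have hwS : w ∈ S := ⟨hwv, huw, hwc2.trans hc.2.2.1, hwu⟩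
  exact absurd (hmin w hwS) (not_le.mpr (above_lt hN hwc2 hwc))

/-! ### Clusters -/

lemma cluster_mono {u v : V} (h : N.reach u v) : N.cluster v ⊆ N.cluster u :=
  fun _ hx => ⟨hx.1, h.trans hx.2⟩

lemma not_leaf_of_cov_out (hN : N.IsPhylo X) {v c : V} (h : N.cov.arc v c) :
    v ∉ N.leaves := by
  intro hv
  rcases Relation.ReflTransGen.cases_head (cov_arc_reach h) with he | ⟨d, hd, _⟩
  · exact cov_arc_ne h he
  · exact leaf_no_arc hN hv hd

lemma sub_cluster (hN : N.IsPhylo X) {v c : V} (hvis : N.Visible v)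
    (hc : {w | N.cov.arc v w} = {c}) : N.cluster v = N.cluster c := by
  have hvc : N.cov.arc v c := by
    have : c ∈ {w | N.cov.arc v w} := by rw [hc]; rfl
    exact this
  apply Set.Subset.antisymm
  · rintro ℓ ⟨hℓl, hℓr⟩
    have hℓne : v ≠ ℓ := by
      rintro rfl; exact not_leaf_of_cov_out hN hvc hℓl
    obtain ⟨c', hc', hreach⟩ := cov_first_step hN hvis (leaf_visible hℓl) hℓr hℓne
    have hcc : c' = c := by
      have : c' ∈ {w | N.cov.arc v w} := hc'
      rwa [hc] at this
    exact ⟨hℓl, hcc ▸ hreach⟩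
  · exact cluster_mono (cov_arc_reach hvc)

/-- Every visible vertex has a non-subdividing visible descendant with the
same cluster. -/
lemma descend (hN : N.IsPhylo X) :
    ∀ v, N.Visible v → ∃ v', (N.Visible v' ∧ ¬ N.cov.Subdividing v') ∧
      N.reach v v' ∧ N.cluster v' = N.cluster v := by
  suffices h : ∀ n, ∀ v, N.Visible v → (below N v).ncard ≤ n →
      ∃ v', (N.Visible v' ∧ ¬ N.cov.Subdividing v') ∧
        N.reach v v' ∧ N.cluster v' = N.cluster v by
    intro v hv; exact h _ v hv le_rfl
  intro n
  induction n using Nat.strong_induction_on with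
  | _ n ih =>
    intro v hv hle
    by_cases hns : N.cov.Subdividing v
    · obtain ⟨c, hc⟩ := Set.ncard_eq_one.mp hns.2
      have hvc : N.cov.arc v c := by
        have : c ∈ {w | N.cov.arc v w} := by rw [hc]; rfl
        exact this
      have hlt : (below N c).ncard < (below N v).ncard :=
        below_lt hN (cov_arc_reach hvc) (cov_arc_ne hvc)
      obtain ⟨v', hv', hr, hcl⟩ := ih _ (lt_of_lt_of_le hlt hle) c hvc.2.1 le_rfl
      exact ⟨v', hv', (cov_arc_reach hvc).trans hr,
        by rw [hcl, ← sub_cluster hN hv hc]⟩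
    · exact ⟨v, ⟨hv, hns⟩, Relation.ReflTransGen.refl, rfl⟩

/-! ### Chains down to a non-subdividing target, and normalisation arcs -/

lemma walk_to (hN : N.IsPhylo X) {t : V} (hvt : N.Visible t)
    (hnst : ¬ N.cov.Subdividing t) :
    ∀ c, N.Visible c → N.reach c t →
      ∃ (s' : V) (l : List V), (N.Visible s' ∧ ¬ N.cov.Subdividing s') ∧ N.reach s' t ∧
        l.Chain' N.cov.arc ∧ l.head? = some c ∧ l.getLast? = some s' ∧
        ∀ w ∈ l.dropLast, N.cov.Subdividing w := by
  suffices h : ∀ n, ∀ c, N.Visible c → N.reach c t → (below N c).ncard ≤ n →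
      ∃ (s' : V) (l : List V), (N.Visible s' ∧ ¬ N.cov.Subdividing s') ∧ N.reach s' t ∧
        l.Chain' N.cov.arc ∧ l.head? = some c ∧ l.getLast? = some s' ∧
        ∀ w ∈ l.dropLast, N.cov.Subdividing w by
    intro c h1 h2; exact h _ c h1 h2 le_rfl
  intro n
  induction n using Nat.strong_induction_on with
  | _ n ih =>
    intro c hvc hreach hle
    by_cases hns : N.cov.Subdividing c
    · have hct : c ≠ t := by rintro rfl; exact hnst hns
      obtain ⟨c', hc', hrt⟩ := cov_first_step hN hvc hvt hreach hct
      have hlt : (below N c').ncard < (below N c).ncard :=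
        below_lt hN (cov_arc_reach hc') (cov_arc_ne hc')
      obtain ⟨s', l, hs', hrt', hch, hh, hl, hsubs⟩ :=
        ih _ (lt_of_lt_of_le hlt hle) c' hc'.2.1 hrt le_rfl
      cases l with
      | nil => simp at hh
      | cons x xs =>
        have hx : x = c' := by simpa using hh
        subst hx
        refine ⟨s', c :: x :: xs, hs', hrt', List.isChain_cons_cons.mpr ⟨hc', hch⟩, rfl,
          by rw [List.getLast?_cons_cons]; exact hl, ?_⟩
        intro w hw
        simp at hw
        rcases hw with rfl | hw
        · exact hns
        · exact hsubs w (by simpa using hw)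
    · exact ⟨c, [c], ⟨hvc, hns⟩, hreach, List.isChain_singleton c, rfl, rfl, by simp⟩

lemma norm_step (hN : N.IsPhylo X) {s t : V} (hs : N.Visible s ∧ ¬ N.cov.Subdividing s)
    (ht : N.Visible t ∧ ¬ N.cov.Subdividing t) (hr : N.reach s t) (hne : s ≠ t) :
    ∃ s', N.normalise.arc s s' ∧ N.reach s' t ∧ N.reach s s' ∧ s ≠ s' := by
  obtain ⟨c, hc, hct⟩ := cov_first_step hN hs.1 ht.1 hr hne
  obtain ⟨s', l, hs', hrt, hch, hh, hl, hsubs⟩ := walk_to hN ht.1 ht.2 c hc.2.1 hct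
  cases l with
  | nil => simp at hh
  | cons x xs =>
    have hx : x = c := by simpa using hh
    subst hx
    have hcs' : N.reach x s' := cov_chain_reach hch rfl hl
    have hss' : N.reach s s' := (cov_arc_reach hc).trans hcs'
    refine ⟨s', ⟨hs, hs', ⟨s :: x :: xs, ⟨List.isChain_cons_cons.mpr ⟨hc, hch⟩, rfl,
      by rw [List.getLast?_cons_cons]; exact hl⟩, by simp, hsubs⟩⟩, hrt, hss', ?_⟩
    rintro rfl
    exact cov_arc_ne hc (reach_antisymm hN (cov_arc_reach hc) hcs')

lemma norm_reach (hN : N.IsPhylo X) {t : V} (ht : N.Visible t ∧ ¬ N.cov.Subdividing t) :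
    ∀ s, (N.Visible s ∧ ¬ N.cov.Subdividing s) → N.reach s t →
      Relation.ReflTransGen N.normalise.arc s t := by
  suffices h : ∀ n, ∀ s, (N.Visible s ∧ ¬ N.cov.Subdividing s) → N.reach s t →
      (below N s).ncard ≤ n → Relation.ReflTransGen N.normalise.arc s t by
    intro s h1 h2; exact h _ s h1 h2 le_rfl
  intro n
  induction n using Nat.strong_induction_on with
  | _ n ih =>
    intro s hsv hr hle
    by_cases hst : s = t
    · subst hst; exact Relation.ReflTransGen.refl
    · obtain ⟨s', harc, hrt, hss', hne⟩ := norm_step hN hsv ht hr hst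
      have hlt : (below N s').ncard < (below N s).ncard := below_lt hN hss' hne
      exact Relation.ReflTransGen.head harc
        (ih _ (lt_of_lt_of_le hlt hle) s' harc.2.1 hrt le_rfl)

/-! ### Trees: unique parents and comparability of ancestors -/

lemma tree_comparable {M : Net V} (huniq : ∀ ⦃a a' b : V⦄, M.arc a b → M.arc a' b → a = a')
    {b ℓ : V} (hb : Relation.ReflTransGen M.arc b ℓ) :
    ∀ a, Relation.ReflTransGen M.arc a ℓ →
      Relation.ReflTransGen M.arc a b ∨ Relation.ReflTransGen M.arc b a := by
  intro a ha
  induction ha using Relation.ReflTransGen.head_induction_on with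
  | refl => exact Or.inr hb
  | head h' hrest ih =>
    rcases ih with h1 | h1
    · exact Or.inl (Relation.ReflTransGen.head h' h1)
    · rcases Relation.ReflTransGen.cases_tail h1 with heq | ⟨d, hbd, hdc⟩
      · exact Or.inl (heq ▸ Relation.ReflTransGen.single h')
      · exact Or.inr (huniq h' hdc ▸ hbd)
/-! ### Reversing a normalisation-arc path -/

lemma reverse_form {a v : V} {l : List V} (hp : N.cov.IsPathFrom a v l)
    (hlen : 2 ≤ l.length) (hint : ∀ w ∈ l.tail.dropLast, N.cov.Subdividing w) :
    ∃ t : List V, (v :: t).Chain' (fun x y => N.cov.arc y x) ∧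
      (∀ w ∈ t.dropLast, N.cov.Subdividing w) ∧ t.getLast? = some a := by
  obtain ⟨hch, hh, hl⟩ := hp
  have hrev : l.reverse.Chain' (fun x y => N.cov.arc y x) := List.isChain_reverse.mpr hch
  have hrh : l.reverse.head? = some v := by rw [List.head?_reverse]; exact hl
  have hrl : l.reverse.getLast? = some a := by rw [List.getLast?_reverse]; exact hh
  have hrlen : 2 ≤ l.reverse.length := by rwa [List.length_reverse]
  cases hr : l.reverse with
  | nil => rw [hr] at hrh; simp at hrh
  | cons x xs =>
    rw [hr] at hrev hrh hrl hrlen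
    have hx : x = v := by simpa using hrh
    subst hx
    have hxs : xs = l.reverse.tail := by rw [hr, List.tail_cons]
    have key : xs.dropLast = l.tail.dropLast.reverse := by
      rw [hxs, List.tail_reverse, List.dropLast_reverse, List.tail_dropLast]
    refine ⟨xs, hrev, ?_, ?_⟩
    · intro w hw
      rw [key, List.mem_reverse] at hw
      exact hint w hw
    · cases xs with
      | nil => simp at hrlen
      | cons y ys =>
        rw [List.getLast?_cons_cons] at hrl
        exact hrl

lemma tree_uniq (hN : N.IsPhylo X) (htree : N.normalise.IsTree) :
    ∀ ⦃a a' b : V⦄, N.normalise.arc a b → N.normalise.arc a' b → a = a' := by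
  intro a a' b h h'
  have hb : b ∈ N.normalise.verts := h.2.1
  have hfin : {u | N.normalise.arc u b}.Finite :=
    hN.finite.subset fun u hu => hu.1.1.1
  exact (Set.ncard_le_one hfin).mp (htree b hb) a h a' h'

end S12


open S12

/-- The normalisation `Ñ` is a tree (every vertex has in-degree at
most 1) if and only if the clusters of the visible vertices of `N` form a hierarchy
on `X`. -/
theorem stmt12 {V : Type*} (N : Net V) (X : Set V) (hN : N.IsPhylo X) :
    N.normalise.IsTree ↔ IsHierarchy (N.cluster '' {v | N.Visible v}) := by
  constructor
  · intro htree
    rintro A ⟨u, hu, rfl⟩ B ⟨w, hw, rfl⟩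
    rcases Set.eq_empty_or_nonempty (N.cluster u ∩ N.cluster w) with he | ⟨ℓ, hℓu, hℓw⟩
    · exact Or.inl he
    · right
      obtain ⟨u', hu', hru, hcu⟩ := descend hN u hu
      obtain ⟨w', hw', hrw, hcw⟩ := descend hN w hw
      have hℓvis : N.Visible ℓ := leaf_visible hℓu.1
      have hℓns : ¬ N.cov.Subdividing ℓ := leaf_not_sub hN hℓu.1
      have h1 : N.reach u' ℓ := (show ℓ ∈ N.cluster u' by rw [hcu]; exact hℓu).2
      have h2 : N.reach w' ℓ := (show ℓ ∈ N.cluster w' by rw [hcw]; exact hℓw).2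
      have r1 := norm_reach hN ⟨hℓvis, hℓns⟩ u' hu' h1
      have r2 := norm_reach hN ⟨hℓvis, hℓns⟩ w' hw' h2
      rcases tree_comparable (tree_uniq hN htree) r2 u' r1 with h | h
      · exact Or.inr (by rw [← hcu, ← hcw]; exact cluster_mono (norm_rtg_reach h))
      · exact Or.inl (by rw [← hcu, ← hcw]; exact cluster_mono (norm_rtg_reach h))
  · intro hH v hv
    have hfin : {u | N.normalise.arc u v}.Finite :=
      hN.finite.subset fun u hu => hu.1.1.1
    show {u | N.normalise.arc u v}.ncard ≤ 1
    rw [Set.ncard_le_one hfin]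
    intro a ha b hb
    obtain ⟨⟨hva, hnsa⟩, -, l, hp, hlen, hint⟩ := ha
    obtain ⟨⟨hvb, hnsb⟩, -, l', hp', hlen', hint'⟩ := hb
    obtain ⟨t, hch, hsub, hlast⟩ := reverse_form hp hlen hint
    obtain ⟨t', hch', hsub', hlast'⟩ := reverse_form hp' hlen' hint'
    exact back_unique hN hH t v a hch hsub hlast hnsa t' b hch' hsub' hlast' hnsb
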